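/- Let a, b, c be pairwise relatively prime integers with 2 ≤ a < b < c, and let S = ⟨ab, ac, bc⟩. Then the genus of S (the number of positive integers not in S) equals abc − (ab + ac + bc − 1)/2. -/

import Mathlib

private lemma aux_mod_a (a b c u v w : ℕ) :
    u * (a*b) + v * (a*c) + w * (b*c) ≡ w * (b*c) [MOD a] := by
  apply (ZMod.natCast_eq_natCast_iff _ _ a).mp; push_cast; simp [ZMod.natCast_self]

private lemma aux_mod_b (a b c u v w : ℕ) :
    u * (a*b) + v * (a*c) + w * (b*c) ≡ v * (a*c) [MOD b] := by
  apply (ZMod.natCast_eq_natCast_iff _ _ b).mp; push_cast; simp [ZMod.natCast_self]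

private lemma aux_mod_c (a b c u v w : ℕ) :
    u * (a*b) + v * (a*c) + w * (b*c) ≡ u * (a*b) [MOD c] := by
  apply (ZMod.natCast_eq_natCast_iff _ _ c).mp; push_cast; simp [ZMod.natCast_self]

private lemma aux_inj (a b c : ℕ)
    (cab : Nat.Coprime a b) (cac : Nat.Coprime a c) (cbc : Nat.Coprime b c)
    {u v w u' v' w' : ℕ} (hu : u < c) (hv : v < b) (hw : w < a)
    (hu' : u' < c) (hv' : v' < b) (hw' : w' < a)
    (h : u * (a*b) + v * (a*c) + w * (b*c) ≡ u' * (a*b) + v' * (a*c) + w' * (b*c) [MOD a*b*c]) :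
    u = u' ∧ v = v' ∧ w = w' := by
  have hda : a ∣ a*b*c := ⟨b*c, by ring⟩
  have hdb : b ∣ a*b*c := ⟨a*c, by ring⟩
  have hdc : c ∣ a*b*c := ⟨a*b, by ring⟩
  have hwa : w * (b*c) ≡ w' * (b*c) [MOD a] :=
    (aux_mod_a a b c u v w).symm.trans ((h.of_dvd hda).trans (aux_mod_a a b c u' v' w'))
  have hvb : v * (a*c) ≡ v' * (a*c) [MOD b] :=
    (aux_mod_b a b c u v w).symm.trans ((h.of_dvd hdb).trans (aux_mod_b a b c u' v' w'))
  have huc : u * (a*b) ≡ u' * (a*b) [MOD c] :=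
    (aux_mod_c a b c u v w).symm.trans ((h.of_dvd hdc).trans (aux_mod_c a b c u' v' w'))
  have hw2 : w ≡ w' [MOD a] :=
    Nat.ModEq.cancel_right_of_coprime (cab.mul_right cac) hwa
  have hv2 : v ≡ v' [MOD b] :=
    Nat.ModEq.cancel_right_of_coprime (cab.symm.mul_right cbc) hvb
  have hu2 : u ≡ u' [MOD c] :=
    Nat.ModEq.cancel_right_of_coprime (cac.symm.mul_right cbc.symm) huc
  refine ⟨?_, ?_, ?_⟩
  · have := hu2; unfold Nat.ModEq at this
    rwa [Nat.mod_eq_of_lt hu, Nat.mod_eq_of_lt hu'] at this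
  · have := hv2; unfold Nat.ModEq at this
    rwa [Nat.mod_eq_of_lt hv, Nat.mod_eq_of_lt hv'] at this
  · have := hw2; unfold Nat.ModEq at this
    rwa [Nat.mod_eq_of_lt hw, Nat.mod_eq_of_lt hw'] at this

private lemma aux_solve' (m x n : ℕ) (hm : 0 < m) (h : Nat.Coprime x m) :
    ∃ w, w < m ∧ w * x ≡ n [MOD m] := by
  haveI : NeZero m := ⟨hm.ne'⟩
  refine ⟨((n : ZMod m) * (x : ZMod m)⁻¹).val, ZMod.val_lt _, ?_⟩
  have h1 : ((((n : ZMod m) * (x : ZMod m)⁻¹).val * x : ℕ) : ZMod m) = ((n : ℕ) : ZMod m) := by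
    push_cast
    rw [ZMod.natCast_zmod_val]
    calc ((n : ZMod m) * (x : ZMod m)⁻¹) * (x : ZMod m)
        = (n : ZMod m) * ((x : ZMod m) * (x : ZMod m)⁻¹) := by ring
      _ = (n : ZMod m) := by rw [ZMod.coe_mul_inv_eq_one x h, mul_one]
  exact (ZMod.natCast_eq_natCast_iff _ _ m).mp h1

private lemma aux_surj (a b c : ℕ) (ha : 0 < a) (hb : 0 < b) (hc : 0 < c)
    (cab : Nat.Coprime a b) (cac : Nat.Coprime a c) (cbc : Nat.Coprime b c) (n : ℕ) :
    ∃ u v w, u < c ∧ v < b ∧ w < a ∧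
      u * (a*b) + v * (a*c) + w * (b*c) ≡ n [MOD a*b*c] := by
  obtain ⟨w, hw, hwm⟩ := aux_solve' a (b*c) n ha (cab.mul_right cac).symm
  obtain ⟨v, hv, hvm⟩ := aux_solve' b (a*c) n hb (cab.symm.mul_right cbc).symm
  obtain ⟨u, hu, hum⟩ := aux_solve' c (a*b) n hc (cac.symm.mul_right cbc.symm).symm
  refine ⟨u, v, w, hu, hv, hw, ?_⟩
  have h1 : u * (a*b) + v * (a*c) + w * (b*c) ≡ n [MOD a] := (aux_mod_a a b c u v w).trans hwm
  have h2 : u * (a*b) + v * (a*c) + w * (b*c) ≡ n [MOD b] := (aux_mod_b a b c u v w).trans hvm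
  have h3 : u * (a*b) + v * (a*c) + w * (b*c) ≡ n [MOD c] := (aux_mod_c a b c u v w).trans hum
  have h12 := (Nat.modEq_and_modEq_iff_modEq_mul cab).mp ⟨h1, h2⟩
  exact (Nat.modEq_and_modEq_iff_modEq_mul (Nat.Coprime.mul cac cbc)).mp ⟨h12, h3⟩

private lemma aux_mem (a b c : ℕ) (ha : 0 < a) (hb : 0 < b) (hc : 0 < c) (n : ℕ) :
    (∃ u v w : ℕ, n = u * (a*b) + v * (a*c) + w * (b*c)) ↔
    ∃ u v w k : ℕ, u < c ∧ v < b ∧ w < a ∧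
      n = (u * (a*b) + v * (a*c) + w * (b*c)) + k * (a*b*c) := by
  constructor
  · rintro ⟨u, v, w, rfl⟩
    refine ⟨u % c, v % b, w % a, u / c + v / b + w / a,
      Nat.mod_lt _ hc, Nat.mod_lt _ hb, Nat.mod_lt _ ha, ?_⟩
    conv_lhs => rw [← Nat.div_add_mod u c, ← Nat.div_add_mod v b, ← Nat.div_add_mod w a]
    ring
  · rintro ⟨u, v, w, k, _, _, _, rfl⟩
    exact ⟨u + k * c, v, w, by ring⟩

private lemma gauss_sq (n : ℕ) : 2 * (∑ i ∈ Finset.range n, i) + n = n * n := by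
  have h := Finset.sum_range_id_mul_two n
  cases n with
  | zero => simp
  | succ m =>
      rw [Nat.succ_sub_one] at h
      calc 2 * (∑ i ∈ Finset.range (m+1), i) + (m+1)
          = (∑ i ∈ Finset.range (m+1), i) * 2 + (m+1) := by ring
        _ = (m+1) * m + (m+1) := by rw [h]
        _ = (m+1) * (m+1) := by ring

theorem genus_supersymmetric
    (a b c : ℕ) (ha : 2 ≤ a) (hab : a < b) (hbc : b < c)
    (cab : Nat.Coprime a b) (cac : Nat.Coprime a c) (cbc : Nat.Coprime b c) :
    {n : ℕ | ¬ ∃ u v w : ℕ, n = u * (a * b) + v * (a * c) + w * (b * c)}.ncard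
      = a * b * c - (a * b + a * c + b * c - 1) / 2 := by
  have ha0 : 0 < a := by omega
  have hb0 : 0 < b := by omega
  have hc0 : 0 < c := by omega
  have hN : 0 < a * b * c := by positivity
  set g : ℕ × ℕ × ℕ → ℕ := fun t => t.1 * (a*b) + t.2.1 * (a*c) + t.2.2 * (b*c) with hgdef
  have hgapp : ∀ u v w : ℕ, g (u, v, w) = u * (a*b) + v * (a*c) + w * (b*c) := fun _ _ _ => rfl
  clear_value g
  set T : Finset (ℕ × ℕ × ℕ) := Finset.range c ×ˢ (Finset.range b ×ˢ Finset.range a) with hTdef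
  have hmemT : ∀ t : ℕ × ℕ × ℕ, t ∈ T ↔ t.1 < c ∧ t.2.1 < b ∧ t.2.2 < a := by
    intro t
    simp [hTdef, Finset.mem_product, and_assoc]
  set G : Finset ℕ :=
    T.biUnion (fun t => (Finset.range (g t / (a*b*c))).image
      (fun k => g t % (a*b*c) + k * (a*b*c))) with hGdef
  -- residue of elements of a block
  have hres : ∀ (t : ℕ × ℕ × ℕ) (k : ℕ),
      (g t % (a*b*c) + k * (a*b*c)) % (a*b*c) = g t % (a*b*c) := by
    intro t k
    rw [Nat.add_mul_mod_self_right, Nat.mod_mod_of_dvd _ dvd_rfl]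
  -- elements of a block are < g t
  have hblock_lt : ∀ (t : ℕ × ℕ × ℕ) (k : ℕ), k < g t / (a*b*c) →
      g t % (a*b*c) + k * (a*b*c) < g t := by
    intro t k hk
    have h2 := Nat.div_add_mod' (g t) (a*b*c)
    have h3 : k * (a*b*c) < g t / (a*b*c) * (a*b*c) :=
      Nat.mul_lt_mul_of_lt_of_le hk (le_refl _) hN
    omega
  -- the set of gaps is ↑G
  have hset : {n : ℕ | ¬ ∃ u v w : ℕ, n = u * (a * b) + v * (a * c) + w * (b * c)} = ↑G := by
    ext n
    simp only [Set.mem_setOf_eq, Finset.coe_biUnion, Set.mem_iUnion, Finset.mem_coe,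
      Finset.mem_image, Finset.mem_range, hGdef, Finset.mem_biUnion]
    constructor
    · intro hn
      obtain ⟨u, v, w, hu, hv, hw, hmod⟩ := aux_surj a b c ha0 hb0 hc0 cab cac cbc n
      rw [← hgapp u v w] at hmod
      have hgt : ¬ (g (u, v, w) ≤ n) := by
        intro hle
        apply hn
        have hdvd : a*b*c ∣ n - g (u, v, w) := (Nat.modEq_iff_dvd' hle).mp hmod
        obtain ⟨k, hk⟩ := hdvd
        rw [mul_comm] at hk
        have hn2 : n = g (u, v, w) + k * (a*b*c) := by omega
        rw [hgapp] at hn2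
        exact (aux_mem a b c ha0 hb0 hc0 n).mpr ⟨u, v, w, k, hu, hv, hw, hn2⟩
      push_neg at hgt
      have hnm : n % (a*b*c) = g (u, v, w) % (a*b*c) := hmod.symm
      refine ⟨(u, v, w), (hmemT _).mpr ⟨hu, hv, hw⟩, n / (a*b*c), ?_, ?_⟩
      · by_contra hge
        push_neg at hge
        have e1 := Nat.div_add_mod' n (a*b*c)
        have e2 := Nat.div_add_mod' (g (u, v, w)) (a*b*c)
        have e3 : g (u, v, w) / (a*b*c) * (a*b*c) ≤ n / (a*b*c) * (a*b*c) :=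
          Nat.mul_le_mul_right _ hge
        omega
      · have e1 := Nat.div_add_mod' n (a*b*c)
        omega
    · rintro ⟨t, htT, k, hk, rfl⟩
      intro hS
      obtain ⟨u', v', w', k', hu', hv', hw', heq⟩ := (aux_mem a b c ha0 hb0 hc0 _).mp hS
      obtain ⟨u, v, w⟩ := t
      obtain ⟨hu, hv, hw⟩ := (hmemT _).mp htT
      have hu : u < c := hu
      have hv : v < b := hv
      have hw : w < a := hw
      have hmod2 : g (u, v, w) ≡ u' * (a*b) + v' * (a*c) + w' * (b*c) [MOD a*b*c] := by
        show g (u, v, w) % (a*b*c) = _ % (a*b*c)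
        conv_lhs => rw [← hres (u, v, w) k]
        rw [heq, Nat.add_mul_mod_self_right]
      rw [hgapp] at hmod2
      obtain ⟨rfl, rfl, rfl⟩ := aux_inj a b c cab cac cbc hu hv hw hu' hv' hw' hmod2
      have hlt := hblock_lt (u, v, w) k hk
      rw [hgapp] at hlt heq
      omega
  -- cardinality of G
  have hinjblock : ∀ t : ℕ × ℕ × ℕ,
      Function.Injective (fun k => g t % (a*b*c) + k * (a*b*c)) := by
    intro t k1 k2 h
    simp only at h
    have : k1 * (a*b*c) = k2 * (a*b*c) := by omega
    exact Nat.eq_of_mul_eq_mul_right hN this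
  have hdisj : ∀ t ∈ T, ∀ t' ∈ T, t ≠ t' →
      Disjoint ((Finset.range (g t / (a*b*c))).image (fun k => g t % (a*b*c) + k * (a*b*c)))
        ((Finset.range (g t' / (a*b*c))).image (fun k => g t' % (a*b*c) + k * (a*b*c))) := by
    intro t ht t' ht' hne
    rw [Finset.disjoint_left]
    rintro n hn hn'
    simp only [Finset.mem_image, Finset.mem_range] at hn hn'
    obtain ⟨k, hk, hkeq⟩ := hn
    obtain ⟨k', hk', hkeq'⟩ := hn'
    have hr : g t % (a*b*c) = g t' % (a*b*c) := by
      have e1 := hres t k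
      have e2 := hres t' k'
      rw [hkeq] at e1
      rw [hkeq'] at e2
      omega
    obtain ⟨u, v, w⟩ := t
    obtain ⟨u', v', w'⟩ := t'
    obtain ⟨hu, hv, hw⟩ := (hmemT _).mp ht
    obtain ⟨hu', hv', hw'⟩ := (hmemT _).mp ht'
    have hu : u < c := hu
    have hv : v < b := hv
    have hw : w < a := hw
    have hu' : u' < c := hu'
    have hv' : v' < b := hv'
    have hw' : w' < a := hw'
    have hmod2 : g (u, v, w) ≡ g (u', v', w') [MOD a*b*c] := hr
    rw [hgapp, hgapp] at hmod2
    obtain ⟨rfl, rfl, rfl⟩ := aux_inj a b c cab cac cbc hu hv hw hu' hv' hw' hmod2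
    exact hne rfl
  have hcard : G.card = ∑ t ∈ T, g t / (a*b*c) := by
    rw [hGdef, Finset.card_biUnion hdisj]
    refine Finset.sum_congr rfl fun t _ => ?_
    rw [Finset.card_image_of_injective _ (hinjblock t), Finset.card_range]
  -- sum identities
  have hsplit : (a*b*c) * (∑ t ∈ T, g t / (a*b*c)) + (∑ t ∈ T, g t % (a*b*c))
      = ∑ t ∈ T, g t := by
    rw [Finset.mul_sum, ← Finset.sum_add_distrib]
    exact Finset.sum_congr rfl fun t _ => Nat.div_add_mod _ _
  have hinjOn : ∀ t ∈ T, ∀ t' ∈ T, g t % (a*b*c) = g t' % (a*b*c) → t = t' := by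
    rintro ⟨u, v, w⟩ ht ⟨u', v', w'⟩ ht' h
    obtain ⟨hu, hv, hw⟩ := (hmemT _).mp ht
    obtain ⟨hu', hv', hw'⟩ := (hmemT _).mp ht'
    have hu : u < c := hu
    have hv : v < b := hv
    have hw : w < a := hw
    have hu' : u' < c := hu'
    have hv' : v' < b := hv'
    have hw' : w' < a := hw'
    have hmod2 : g (u, v, w) ≡ g (u', v', w') [MOD a*b*c] := h
    rw [hgapp, hgapp] at hmod2
    obtain ⟨rfl, rfl, rfl⟩ := aux_inj a b c cab cac cbc hu hv hw hu' hv' hw' hmod2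
    rfl
  have hTcard : T.card = c * (b * a) := by simp [hTdef]
  have hMimg : T.image (fun t => g t % (a*b*c)) = Finset.range (a*b*c) := by
    apply Finset.eq_of_subset_of_card_le
    · intro r hr
      simp only [Finset.mem_image] at hr
      obtain ⟨t, _, rfl⟩ := hr
      exact Finset.mem_range.mpr (Nat.mod_lt _ hN)
    · rw [Finset.card_range,
        Finset.card_image_of_injOn
          (fun x hx y hy h => hinjOn x (Finset.mem_coe.mp hx) y (Finset.mem_coe.mp hy) h),
        hTcard]
      exact le_of_eq (by ring)
  have hM : (∑ t ∈ T, g t % (a*b*c)) = ∑ r ∈ Finset.range (a*b*c), r := by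
    rw [← hMimg, Finset.sum_image hinjOn]
  have hSg : (∑ t ∈ T, g t)
      = a*a*b*b*(∑ i ∈ Finset.range c, i) + a*a*c*c*(∑ i ∈ Finset.range b, i)
        + b*b*c*c*(∑ i ∈ Finset.range a, i) := by
    rw [hTdef]
    have hfun : ∀ t : ℕ × ℕ × ℕ, g t = t.1 * (a*b) + t.2.1 * (a*c) + t.2.2 * (b*c) := by
      rintro ⟨u, v, w⟩; exact hgapp u v w
    rw [Finset.sum_congr rfl fun t _ => hfun t]
    rw [Finset.sum_product]
    simp only [Finset.sum_product]
    simp only [Finset.sum_add_distrib, Finset.sum_const, Finset.card_range, smul_eq_mul,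
      Finset.sum_mul, Finset.mul_sum]
    ring_nf
  -- pass to integers
  have e1 : (a*b*c) * (∑ t ∈ T, g t / (a*b*c)) + (∑ r ∈ Finset.range (a*b*c), r)
      = ∑ t ∈ T, g t := by rw [← hM]; exact hsplit
  have e2 : 2 * (∑ r ∈ Finset.range (a*b*c), r) + (a*b*c) = (a*b*c) * (a*b*c) := gauss_sq _
  have e4 : 2 * (∑ i ∈ Finset.range c, i) + c = c * c := gauss_sq c
  have e5 : 2 * (∑ i ∈ Finset.range b, i) + b = b * b := gauss_sq b
  have e6 : 2 * (∑ i ∈ Finset.range a, i) + a = a * a := gauss_sq a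
  generalize hQv : (∑ t ∈ T, g t / (a*b*c)) = Q at e1 hcard
  generalize hMv : (∑ r ∈ Finset.range (a*b*c), r) = M at e1 e2
  generalize hSgv : (∑ t ∈ T, g t) = Sg at e1 hSg
  generalize hScv : (∑ i ∈ Finset.range c, i) = Sc at hSg e4
  generalize hSbv : (∑ i ∈ Finset.range b, i) = Sb at hSg e5
  generalize hSav : (∑ i ∈ Finset.range a, i) = Sa at hSg e6
  have E1 : ((a:ℤ)*b*c) * Q + M = Sg := by exact_mod_cast e1
  have E2 : 2 * (M:ℤ) + (a:ℤ)*b*c = ((a:ℤ)*b*c) * ((a:ℤ)*b*c) := by exact_mod_cast e2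
  have E3 : (Sg:ℤ) = (a:ℤ)*a*b*b*Sc + (a:ℤ)*a*c*c*Sb + (b:ℤ)*b*c*c*Sa := by exact_mod_cast hSg
  have E4 : 2 * (Sc:ℤ) + c = (c:ℤ) * c := by exact_mod_cast e4
  have E5 : 2 * (Sb:ℤ) + b = (b:ℤ) * b := by exact_mod_cast e5
  have E6 : 2 * (Sa:ℤ) + a = (a:ℤ) * a := by exact_mod_cast e6
  have habc : ((a:ℤ)*b*c) ≠ 0 := by positivity
  have hZ : ((a:ℤ)*b*c) * (2*Q + ((a:ℤ)*b + (a:ℤ)*c + (b:ℤ)*c))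
      = ((a:ℤ)*b*c) * (2*((a:ℤ)*b*c) + 1) := by
    linear_combination 2*E1 - E2 + 2*E3 + ((a:ℤ)*a*b*b)*E4 + ((a:ℤ)*a*c*c)*E5 + ((b:ℤ)*b*c*c)*E6
  have hZ2 : 2*(Q:ℤ) + ((a:ℤ)*b + (a:ℤ)*c + (b:ℤ)*c) = 2*((a:ℤ)*b*c) + 1 :=
    mul_left_cancel₀ habc hZ
  have h2P : 2*Q + (a*b + a*c + b*c) = 2*(a*b*c) + 1 := by exact_mod_cast hZ2
  rw [hset, Set.ncard_coe_finset, hcard]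
  generalize hm : a*b*c = m at h2P ⊢
  generalize hx : a*b = x at h2P ⊢
  generalize hy : a*c = y at h2P ⊢
  generalize hz : b*c = z at h2P ⊢
  omega
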